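/- If L is a dense linear order without endpoints that is an η₁-set, then L is countably saturated as a model of the theory of dense linear orders without endpoints. -/

import Mathlib

open FirstOrder

/-- An `η₁`-set. -/
def IsEtaOne (L : Type*) [LinearOrder L] : Prop :=
  ∀ A B : Set L, A.Countable → B.Countable → (∀ a ∈ A, ∀ b ∈ B, a < b) →
    ∃ x, (∀ a ∈ A, a < x) ∧ (∀ b ∈ B, x < b)

/-- A structure is countably saturated if every countable, finitely satisfiable
set of formulas in one free variable over countably many parameters is realized. -/
def CountablySaturated (L : FirstOrder.Language) (M : Type*) [L.Structure M] : Prop :=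
  ∀ (p : ℕ → M) (T : Set (L.Formula (ℕ ⊕ Fin 1))), T.Countable →
    (∀ s : Finset (L.Formula (ℕ ⊕ Fin 1)), ↑s ⊆ T →
      ∃ x : M, ∀ φ ∈ s, φ.Realize (Sum.elim p fun _ => x)) →
    ∃ x : M, ∀ φ ∈ T, φ.Realize (Sum.elim p fun _ => x)


open FirstOrder FirstOrder.Language FirstOrder.Language.Structure
open scoped Classical

universe u

private lemma key_finite {M : Type u} [LinearOrder M] [Language.order.Structure M]
    [Language.order.OrderedStructure M] [M ⊨ Language.order.dlo] [Nonempty M]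
    {σ : Type*} [Finite σ] (ψ : Language.order.Formula σ)
    (v w : σ → M) (hvw : ∀ i j, v i ≤ v j ↔ w i ≤ w j) :
    ψ.Realize v ↔ ψ.Realize w := by
  classical
  haveI : Infinite M := inferInstance
  haveI : Countable ↥(Set.range v ∪ Set.range w) :=
    (((Set.finite_range v).union (Set.finite_range w)).countable).to_subtype
  obtain ⟨S, hsub, hcard⟩ := Language.exists_elementarySubstructure_card_eq Language.order
    (Set.range v ∪ Set.range w) Cardinal.aleph0 le_rfl
    (Cardinal.lift_le.2 Cardinal.mk_le_aleph0)
    (by simp [order.card_eq_one, Cardinal.one_le_aleph0])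
    (Cardinal.lift_le.2 (Cardinal.aleph0_le_mk M))
  have hScard : (Cardinal.mk ↥S) = Cardinal.aleph0 := by
    simpa using hcard
  haveI : Countable ↥S := Cardinal.mk_le_aleph0_iff.1 hScard.le
  haveI : Nonempty ↥S := by
    haveI : Infinite ↥S := Cardinal.infinite_iff.2 hScard.ge
    infer_instance
  haveI : Language.order.OrderedStructure (↥S) :=
    ⟨fun x => relMap_leSymb (fun i => ((x i : ↥S) : M))⟩
  have hUH := (Language.isFraisseLimit_of_countable_nonempty_dlo ↥S).ultrahomogeneous
  set v' : σ → ↥S := fun i => ⟨v i, hsub (Set.mem_union_left _ (Set.mem_range_self i))⟩ with hv'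
  set w' : σ → ↥S := fun i => ⟨w i, hsub (Set.mem_union_right _ (Set.mem_range_self i))⟩ with hw'
  have hvw' : ∀ i j, v' i ≤ v' j ↔ w' i ≤ w' j := fun i j => by
    simpa [hv', hw', Subtype.mk_le_mk] using hvw i j
  -- the finitely generated substructure on the range of v'
  set Sub : Language.order.Substructure ↥S :=
    Substructure.closure Language.order (Set.range v') with hSub
  have hmemSub : ∀ (a : ↥Sub), ∃ i, v' i = (a : ↥S) := by
    rintro ⟨a, ha⟩
    rw [hSub, Substructure.mem_closure_iff_of_isRelational] at ha
    exact ha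
  -- the order embedding carrying v' i to w' i
  set eFun : ↥Sub → ↥S := fun a => w' (Classical.choose (hmemSub a)) with heFun
  have heSpec : ∀ (a : ↥Sub), v' (Classical.choose (hmemSub a)) = (a : ↥S) :=
    fun a => Classical.choose_spec (hmemSub a)
  have heMono : StrictMono eFun := by
    intro a b hab
    have h1 : v' (Classical.choose (hmemSub a)) < v' (Classical.choose (hmemSub b)) := by
      rw [heSpec a, heSpec b]
      exact hab
    have h2 : w' (Classical.choose (hmemSub a)) < w' (Classical.choose (hmemSub b)) := by
      rcases lt_iff_le_not_ge.1 h1 with ⟨h3, h4⟩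
      exact lt_iff_le_not_ge.2 ⟨(hvw' _ _).1 h3, fun hc => h4 ((hvw' _ _).2 hc)⟩
    exact h2
  set f : ↥Sub ↪[Language.order] ↥S :=
    StrongHomClass.toEmbedding (OrderEmbedding.ofStrictMono eFun heMono) with hf
  obtain ⟨g, hg⟩ := hUH Sub (Substructure.fg_closure (Set.finite_range v')) f
  have hgv : ∀ i, g (v' i) = w' i := by
    intro i
    have hmem : v' i ∈ Sub := Substructure.subset_closure (Set.mem_range_self i)
    have h1 : f ⟨v' i, hmem⟩ = g (v' i) := by
      rw [hg]; rfl
    have h2 : f ⟨v' i, hmem⟩ = w' (Classical.choose (hmemSub ⟨v' i, hmem⟩)) := rfl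
    have h3 : v' (Classical.choose (hmemSub ⟨v' i, hmem⟩)) = v' i := heSpec ⟨v' i, hmem⟩
    have h4 : w' (Classical.choose (hmemSub ⟨v' i, hmem⟩)) = w' i := by
      have hvv : v (Classical.choose (hmemSub ⟨v' i, hmem⟩)) = v i := congrArg Subtype.val h3
      apply Subtype.ext
      exact le_antisymm ((hvw _ _).1 hvv.le) ((hvw _ _).1 hvv.ge)
    rw [← h1, h2, h4]
  have hgvw : g ∘ v' = w' := funext hgv
  have hR1 : ψ.Realize v ↔ ψ.Realize v' := by
    have := S.subtype.map_formula ψ v'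
    rwa [show (S.subtype ∘ v') = v from rfl] at this
  have hR2 : ψ.Realize w ↔ ψ.Realize w' := by
    have := S.subtype.map_formula ψ w'
    rwa [show (S.subtype ∘ w') = w from rfl] at this
  have hR3 : ψ.Realize (g ∘ v') ↔ ψ.Realize v' := StrongHomClass.realize_formula g ψ
  rw [hR1, hR2, ← hgvw, hR3]

private lemma key_formula {M : Type u} [LinearOrder M] [Language.order.Structure M]
    [Language.order.OrderedStructure M] [M ⊨ Language.order.dlo] [Nonempty M]
    {α : Type*} [DecidableEq α] (φ : Language.order.Formula α) (v w : α → M)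
    (h : ∀ i ∈ φ.freeVarFinset, ∀ j ∈ φ.freeVarFinset, (v i ≤ v j ↔ w i ≤ w j)) :
    φ.Realize v ↔ φ.Realize w := by
  classical
  have hsub : ↑φ.freeVarFinset ⊆ (↑φ.freeVarFinset : Set α) := Set.Subset.rfl
  haveI : Finite ↥(↑φ.freeVarFinset : Set α) := φ.freeVarFinset.finite_toSet.to_subtype
  have h1 := BoundedFormula.realize_restrictFreeVar' (M := M) (φ := φ) hsub (v := v)
    (xs := default)
  have h2 := BoundedFormula.realize_restrictFreeVar' (M := M) (φ := φ) hsub (v := w)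
    (xs := default)
  have hk := key_finite (φ.restrictFreeVar (Set.inclusion hsub)) (v ∘ (↑)) (w ∘ (↑))
    (fun i j => h i (Finset.mem_coe.1 i.2) j (Finset.mem_coe.1 j.2))
  exact (h1.symm.trans hk).trans h2

/-- The atomic formula asserting the variable `Sum.inr 0` stands in relation `o` to the
parameter `Sum.inl n`. -/
def ordAtom (n : ℕ) (o : Ordering) : Language.order.Formula (ℕ ⊕ Fin 1) :=
  match o with
  | .lt => Term.lt (Term.var (Sum.inl (Sum.inr 0))) (Term.var (Sum.inl (Sum.inl n)))
  | .eq => Term.bdEqual (Term.var (Sum.inl (Sum.inr 0))) (Term.var (Sum.inl (Sum.inl n)))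
  | .gt => Term.lt (Term.var (Sum.inl (Sum.inl n))) (Term.var (Sum.inl (Sum.inr 0)))

lemma realize_ordAtom {M : Type u} [LinearOrder M] [Language.order.Structure M]
    [Language.order.OrderedStructure M] (n : ℕ) (o : Ordering) (u : (ℕ ⊕ Fin 1) → M) :
    (ordAtom n o).Realize u ↔
      (match o with
        | .lt => u (Sum.inr 0) < u (Sum.inl n)
        | .eq => u (Sum.inr 0) = u (Sum.inl n)
        | .gt => u (Sum.inl n) < u (Sum.inr 0)) := by
  cases o <;> simp [ordAtom, Formula.Realize]

variable {M : Type u} [Language.order.Structure M]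

/-- The invariant: `s` is satisfiable together with every finite subset of the type. -/
def OrdInv (p : ℕ → M) (e : ℕ → Language.order.Formula (ℕ ⊕ Fin 1))
    (s : Finset (Language.order.Formula (ℕ ⊕ Fin 1))) : Prop :=
  ∀ t : Finset ℕ, ∃ x : M,
    (∀ k ∈ t, (e k).Realize (Sum.elim p fun _ => x)) ∧
    (∀ φ ∈ s, φ.Realize (Sum.elim p fun _ => x))

open Classical in
/-- Pick a consistent decision for the position of the realizing element relative to `p n`. -/
noncomputable def ordPick (p : ℕ → M) (e : ℕ → Language.order.Formula (ℕ ⊕ Fin 1))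
    (n : ℕ) (s : Finset (Language.order.Formula (ℕ ⊕ Fin 1))) : Ordering :=
  if OrdInv p e (insert (ordAtom n .lt) s) then .lt
  else if OrdInv p e (insert (ordAtom n .eq) s) then .eq
  else .gt

/-- Stages of the completion of the type by position decisions. -/
noncomputable def ordStage (p : ℕ → M) (e : ℕ → Language.order.Formula (ℕ ⊕ Fin 1)) :
    ℕ → Finset (Language.order.Formula (ℕ ⊕ Fin 1))
  | 0 => ∅
  | n + 1 => insert (ordAtom n (ordPick p e n (ordStage p e n))) (ordStage p e n)

lemma ordStage_mono (p : ℕ → M) (e : ℕ → Language.order.Formula (ℕ ⊕ Fin 1)) :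
    Monotone (fun n => ordStage p e n) :=
  monotone_nat_of_le_succ (fun n => Finset.subset_insert _ _)

lemma ordPick_inv [LinearOrder M] [Language.order.OrderedStructure M]
    {p : ℕ → M} {e : ℕ → Language.order.Formula (ℕ ⊕ Fin 1)}
    {s : Finset (Language.order.Formula (ℕ ⊕ Fin 1))} (n : ℕ) (hInv : OrdInv p e s) :
    OrdInv p e (insert (ordAtom n (ordPick p e n s)) s) := by
  classical
  unfold ordPick
  split_ifs with h1 h2
  · exact h1
  · exact h2
  · simp only [OrdInv, not_forall, not_exists] at h1 h2
    obtain ⟨t1, H1⟩ := h1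
    obtain ⟨t2, H2⟩ := h2
    intro t
    obtain ⟨x, hxA, hxB⟩ := hInv (t ∪ t1 ∪ t2)
    have hx' : ∀ o : Ordering, (ordAtom n o).Realize (Sum.elim p fun _ => x) →
        ∀ tt : Finset ℕ, (∀ k ∈ tt, (e k).Realize (Sum.elim p fun _ => x)) →
        (∀ y, ¬((∀ k ∈ tt, (e k).Realize (Sum.elim p fun _ => y)) ∧
          (∀ φ ∈ insert (ordAtom n o) s, φ.Realize (Sum.elim p fun _ => y)))) → False := by
      intro o ho tt Ht H
      exact H x ⟨Ht, fun φ hφ => by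
        rcases Finset.mem_insert.1 hφ with rfl | hφ
        · exact ho
        · exact hxB _ hφ⟩
    rcases lt_trichotomy x (p n) with hlt | heq | hgt
    · exact (hx' .lt (by rw [realize_ordAtom]; simpa using hlt)
        t1 (fun k hk => hxA k (by simp [hk])) H1).elim
    · exact (hx' .eq (by rw [realize_ordAtom]; simpa using heq)
        t2 (fun k hk => hxA k (by simp [hk])) H2).elim
    · exact ⟨x, fun k hk => hxA k (by simp [hk]), fun φ hφ => by
        rcases Finset.mem_insert.1 hφ with rfl | hφ
        · rw [realize_ordAtom]; simpa using hgt
        · exact hxB _ hφ⟩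

lemma ordStage_inv [LinearOrder M] [Language.order.OrderedStructure M]
    {p : ℕ → M} {e : ℕ → Language.order.Formula (ℕ ⊕ Fin 1)}
    (h0 : OrdInv p e ∅) : ∀ n, OrdInv p e (ordStage p e n) := by
  intro n
  induction n with
  | zero => exact h0
  | succ n ih => exact ordPick_inv n ih


/-- A dense linear order without endpoints that is an `η₁`-set is a countably
saturated model of the theory of dense linear orders without endpoints. -/
theorem etaOne_countablySaturated (L : Type*) [LinearOrder L]
    [DenselyOrdered L] [NoMinOrder L] [NoMaxOrder L] (h : IsEtaOne L) :
    letI := Language.orderStructure L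
    L ⊨ Language.order.dlo ∧ CountablySaturated Language.order L := by
  letI := Language.orderStructure L
  haveI : Language.order.OrderedStructure L := ⟨fun x => Iff.rfl⟩
  refine ⟨inferInstance, ?_⟩
  intro p T hT hfin
  obtain ⟨x0, -⟩ := hfin ∅ (by simp)
  haveI : Nonempty L := ⟨x0⟩
  haveI : L ⊨ Language.order.dlo := inferInstance
  rcases T.eq_empty_or_nonempty with rfl | hTne
  · exact ⟨x0, by simp⟩
  obtain ⟨e, rfl⟩ := Set.Countable.exists_eq_range hT hTne
  -- the completion machinery applies
  have h0 : OrdInv p e ∅ := by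
    intro t
    obtain ⟨x, hx⟩ := hfin (t.image e) (by
      intro φ hφ
      simp only [Finset.coe_image, Set.mem_image, Finset.mem_coe] at hφ
      obtain ⟨k, -, rfl⟩ := hφ
      exact Set.mem_range_self k)
    exact ⟨x, fun k hk => hx _ (Finset.mem_image_of_mem e hk), by simp⟩
  have hInv := ordStage_inv h0
  set D : ℕ → Ordering := fun n => ordPick p e n (ordStage p e n) with hD
  have hmem : ∀ n m, n < m → ordAtom n (D n) ∈ ordStage p e m := by
    intro n m hnm
    refine ordStage_mono p e hnm (Finset.mem_insert_self _ _)
  -- find x realizing all the atomic decisions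
  obtain ⟨x, hx⟩ : ∃ x : L, ∀ n, (ordAtom n (D n)).Realize (Sum.elim p fun _ => x) := by
    by_cases hEq : ∃ n, D n = .eq
    · obtain ⟨n₀, hn₀⟩ := hEq
      refine ⟨p n₀, fun m => ?_⟩
      obtain ⟨y, -, hy⟩ := hInv (max n₀ m + 1) ∅
      have h1 := (realize_ordAtom n₀ (D n₀) _).1 (hy _ (hmem n₀ _ (by omega)))
      have h2 := hy _ (hmem m _ (by omega))
      rw [hn₀] at h1
      simp only [Sum.elim_inl, Sum.elim_inr] at h1
      have hyx : (Sum.elim p fun _ : Fin 1 => y) = (Sum.elim p fun _ : Fin 1 => p n₀) := by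
        funext i
        rcases i with a | i
        · rfl
        · exact h1
      rwa [hyx] at h2
    · push_neg at hEq
      have cross : ∀ a ∈ p '' {n | D n = .gt}, ∀ b ∈ p '' {n | D n = .lt}, a < b := by
        rintro _ ⟨n, hn, rfl⟩ _ ⟨m, hm, rfl⟩
        obtain ⟨y, -, hy⟩ := hInv (max n m + 1) ∅
        have h1 := (realize_ordAtom n (D n) _).1 (hy _ (hmem n _ (by omega)))
        have h2 := (realize_ordAtom m (D m) _).1 (hy _ (hmem m _ (by omega)))
        rw [hn] at h1
        rw [hm] at h2
        simp only [Sum.elim_inl, Sum.elim_inr] at h1 h2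
        exact h1.trans h2
      obtain ⟨x, hxA, hxB⟩ := h (p '' {n | D n = .gt}) (p '' {n | D n = .lt})
        ((Set.to_countable _).image p) ((Set.to_countable _).image p) cross
      refine ⟨x, fun m => ?_⟩
      rcases hDm : D m with _ | _ | _
      · rw [realize_ordAtom]
        exact hxB _ ⟨m, hDm, rfl⟩
      · exact absurd hDm (hEq m)
      · rw [realize_ordAtom]
        exact hxA _ ⟨m, hDm, rfl⟩
  -- x realizes the whole type
  refine ⟨x, ?_⟩
  rintro φ ⟨k, rfl⟩
  classical
  set F := (e k).freeVarFinset with hF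
  set N := (F.sup fun i => Sum.elim id (fun _ => 0) i) + 1 with hN
  obtain ⟨y, hy1, hy2⟩ := hInv N {k}
  have hbound : ∀ a : ℕ, Sum.inl a ∈ F → a < N := by
    intro a ha
    have := Finset.le_sup (f := fun i => Sum.elim id (fun _ : Fin 1 => 0) i) ha
    simp only [Sum.elim_inl, id_eq] at this
    omega
  have hrel : ∀ a : ℕ, a < N → ((p a ≤ y ↔ p a ≤ x) ∧ (y ≤ p a ↔ x ≤ p a)) := by
    intro a ha
    have h1 := (realize_ordAtom a (D a) _).1 (hy2 _ (hmem a N ha))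
    have h2 := (realize_ordAtom a (D a) _).1 (hx a)
    rcases hDa : D a with _ | _ | _ <;> rw [hDa] at h1 h2 <;>
      simp only [Sum.elim_inl, Sum.elim_inr] at h1 h2
    · exact ⟨iff_of_false (not_le.2 h1) (not_le.2 h2),
        iff_of_true h1.le h2.le⟩
    · rw [h1, h2]
      exact ⟨Iff.rfl, Iff.rfl⟩
    · exact ⟨iff_of_true h1.le h2.le,
        iff_of_false (not_le.2 h1) (not_le.2 h2)⟩
  have key := key_formula (e k) (Sum.elim p fun _ => y) (Sum.elim p fun _ => x) ?_
  · exact key.1 (hy1 k (Finset.mem_singleton_self k))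
  · intro i hi j hj
    rcases i with a | i <;> rcases j with b | j <;>
      simp only [Sum.elim_inl, Sum.elim_inr]
    · exact (hrel a (hbound a hi)).1
    · exact (hrel b (hbound b hj)).2
    · exact iff_of_true le_rfl le_rfl
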